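/- Let P and Q be nonzero integers with D = P^2 - 4Q ≠ 0, let U = U(P,Q) be nondegenerate, and let p be a prime dividing both P and Q. Let n ≥ 1 satisfy gcd(p,n) = 1 and exclude the case where simultaneously p = 2, n = 1, and 2·v_2(P) > v_2(Q) (v_2 the 2-adic valuation). Then for every integer k ≥ 1, M^U_{p^k n} ≡ 0 (mod p^{p^{k-1}}); that is, there exists an integer t such that M^U_{p^k n} = p^{p^{k-1}}·t. -/

import Mathlib

/-- Lucas sequence of the first kind: `U 0 = 0`, `U 1 = 1`,
`U (n+2) = P * U (n+1) - Q * U n`. -/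
def lucasU (P Q : ℤ) : ℕ → ℤ
  | 0 => 0
  | 1 => 1
  | n + 2 => P * lucasU P Q (n + 1) - Q * lucasU P Q n

/-- Möbius dual of the Lucas sequence of the first kind:
`M^U_n = ∏_{d ∣ n} U_d ^ μ(n/d)`, as a rational number. -/
def mobiusDualU (P Q : ℤ) (n : ℕ) : ℚ :=
  ∏ d ∈ n.divisors, (lucasU P Q d : ℚ) ^ (ArithmeticFunction.moebius (n / d))

open Polynomial

noncomputable section

def lucPoly (P Q : ℤ) : ℤ[X] := X ^ 2 - C P * X + C Q

abbrev LucR (P Q : ℤ) := AdjoinRoot (lucPoly P Q)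

def la (P Q : ℤ) : LucR P Q := AdjoinRoot.root _
def lb (P Q : ℤ) : LucR P Q := (P : LucR P Q) - la P Q

variable (P Q : ℤ)

lemma lucPoly_monic : (lucPoly P Q).Monic := by
  have h : lucPoly P Q = X ^ 2 + (C (-P) * X + C Q) := by simp [lucPoly]; ring
  rw [h]
  exact monic_X_pow_add (lt_of_le_of_lt (degree_linear_le) (by norm_num))

lemma lucPoly_degree : (lucPoly P Q).degree = 2 := by
  have h : lucPoly P Q = C 1 * X ^ 2 + C (-P) * X + C Q := by simp [lucPoly]; ring
  rw [h]
  exact degree_quadratic one_ne_zero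

lemma la_sq : la P Q ^ 2 = (P : LucR P Q) * la P Q - (Q : LucR P Q) := by
  have h : eval₂ (AdjoinRoot.of (lucPoly P Q)) (AdjoinRoot.root (lucPoly P Q))
      (X ^ 2 - C P * X + C Q) = 0 := AdjoinRoot.eval₂_root (lucPoly P Q)
  simp only [eval₂_add, eval₂_sub, eval₂_mul, eval₂_pow, eval₂_X, eval₂_C] at h
  rw [eq_intCast (AdjoinRoot.of (lucPoly P Q)) P, eq_intCast (AdjoinRoot.of (lucPoly P Q)) Q] at h
  unfold la
  linear_combination h

lemma lab : la P Q * lb P Q = (Q : LucR P Q) := by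
  unfold lb; linear_combination - la_sq P Q

lemma lb_sq : lb P Q ^ 2 = (P : LucR P Q) * lb P Q - (Q : LucR P Q) := by
  unfold lb; linear_combination la_sq P Q

lemma lapb : la P Q + lb P Q = (P : LucR P Q) := by unfold lb; ring

lemma ab_sub_sq : (la P Q - lb P Q) ^ 2 = ((P ^ 2 - 4 * Q : ℤ) : LucR P Q) := by
  unfold lb; push_cast; linear_combination (4 : LucR P Q) * la_sq P Q

lemma int_dvd_of_dvd {c m : ℤ} (h : (c : LucR P Q) ∣ (m : LucR P Q)) : c ∣ m := by
  obtain ⟨r, hr⟩ := h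
  obtain ⟨g, rfl⟩ := AdjoinRoot.mk_surjective r
  have hcast : ∀ z : ℤ, (z : LucR P Q) = AdjoinRoot.mk (lucPoly P Q) (C z) := by
    intro z
    exact (eq_intCast (AdjoinRoot.of (lucPoly P Q)) z).symm
  rw [hcast m, hcast c, ← map_mul] at hr
  have hz : AdjoinRoot.mk (lucPoly P Q) (C m - C c * g) = 0 := by
    rw [map_sub, hr, sub_self]
  rw [AdjoinRoot.mk_eq_zero] at hz
  have h0 : (C m - C c * g) %ₘ lucPoly P Q = 0 :=
    (modByMonic_eq_zero_iff_dvd (lucPoly_monic P Q)).mpr hz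
  rw [sub_modByMonic] at h0
  have h1 : C m %ₘ lucPoly P Q = C m := by
    rw [modByMonic_eq_self_iff (lucPoly_monic P Q), lucPoly_degree]
    exact lt_of_le_of_lt degree_C_le (by norm_num)
  have h2 : (C c * g) %ₘ lucPoly P Q = C c * (g %ₘ lucPoly P Q) := by
    rw [← smul_eq_C_mul, ← smul_eq_C_mul, smul_modByMonic]
  rw [h1, h2, sub_eq_zero] at h0
  refine ⟨(g %ₘ lucPoly P Q).coeff 0, ?_⟩
  have := congrArg (fun q : ℤ[X] => q.coeff 0) h0
  simpa [coeff_C_mul] using this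

lemma intReg {m : ℤ} (hm : m ≠ 0) : (m : LucR P Q) ∈ nonZeroDivisors (LucR P Q) := by
  rw [mem_nonZeroDivisors_iff_right]
  intro z hz
  obtain ⟨g, rfl⟩ := AdjoinRoot.mk_surjective z
  have hcast : (m : LucR P Q) = AdjoinRoot.mk (lucPoly P Q) (C m) :=
    (eq_intCast (AdjoinRoot.of (lucPoly P Q)) m).symm
  rw [hcast, ← map_mul] at hz
  rw [AdjoinRoot.mk_eq_zero] at hz
  have h0 : (g * C m) %ₘ lucPoly P Q = 0 :=
    (modByMonic_eq_zero_iff_dvd (lucPoly_monic P Q)).mpr hz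
  have hgm : g * C m = m • g := by rw [smul_eq_C_mul]; ring
  rw [hgm, smul_modByMonic, smul_eq_C_mul] at h0
  rcases mul_eq_zero.mp h0 with h | h
  · exact absurd h (by simpa using hm)
  · rw [AdjoinRoot.mk_eq_zero]
    exact (modByMonic_eq_zero_iff_dvd (lucPoly_monic P Q)).mp h

lemma abReg (hD : P ^ 2 - 4 * Q ≠ 0) :
    (la P Q - lb P Q) ∈ nonZeroDivisors (LucR P Q) := by
  rw [mem_nonZeroDivisors_iff_right]
  intro z hz
  have h2 : z * ((P ^ 2 - 4 * Q : ℤ) : LucR P Q) = 0 := by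
    rw [← ab_sub_sq]
    calc z * (la P Q - lb P Q) ^ 2 = z * (la P Q - lb P Q) * (la P Q - lb P Q) := by ring
    _ = 0 := by rw [hz, zero_mul]
  exact (mem_nonZeroDivisors_iff_right.mp (intReg P Q hD)) z h2

lemma bReg (hQ : Q ≠ 0) : lb P Q ∈ nonZeroDivisors (LucR P Q) := by
  rw [mem_nonZeroDivisors_iff_right]
  intro z hz
  have h2 : z * ((Q : ℤ) : LucR P Q) = 0 := by
    rw [← lab]
    calc z * (la P Q * lb P Q) = z * lb P Q * la P Q := by ring
    _ = 0 := by rw [hz, zero_mul]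
  exact (mem_nonZeroDivisors_iff_right.mp (intReg P Q hQ)) z h2

lemma two_step {C : ℕ → Prop} (h0 : C 0) (h1 : C 1)
    (hs : ∀ m, C m → C (m + 1) → C (m + 2)) : ∀ m, C m := by
  intro m
  suffices h : C m ∧ C (m + 1) from h.1
  induction m with
  | zero => exact ⟨h0, h1⟩
  | succ n ih => exact ⟨ih.2, hs n ih.1 ih.2⟩

lemma key_U : ∀ N, (la P Q - lb P Q) * ((lucasU P Q N : ℤ) : LucR P Q)
    = la P Q ^ N - lb P Q ^ N := by
  refine two_step ?_ ?_ ?_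
  · simp [lucasU]
  · simp [lucasU]
  · intro m ih0 ih1
    have hrec : lucasU P Q (m + 2) = P * lucasU P Q (m + 1) - Q * lucasU P Q m := rfl
    rw [hrec]
    push_cast
    linear_combination (P : LucR P Q) * ih1 - (Q : LucR P Q) * ih0
      - la P Q ^ m * la_sq P Q + lb P Q ^ m * lb_sq P Q

def lucC (P Q : ℤ) (d : ℕ) : LucR P Q :=
  ∑ j ∈ Finset.range (Nat.totient d + 1),
    ((cyclotomic d ℤ).coeff j : LucR P Q) * la P Q ^ j * lb P Q ^ (Nat.totient d - j)

lemma lucC_one : lucC P Q 1 = la P Q - lb P Q := by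
  unfold lucC
  rw [Nat.totient_one, cyclotomic_one]
  rw [Finset.sum_range_succ, Finset.sum_range_one]
  simp [coeff_sub, coeff_X_zero, coeff_X_one, coeff_one]
  ring

lemma prod_lucC (hQ : Q ≠ 0) {N : ℕ} (hN : 0 < N) :
    ∏ d ∈ N.divisors, lucC P Q d = la P Q ^ N - lb P Q ^ N := by
  classical
  set K := FractionRing (LucR P Q)
  have hinj : Function.Injective (algebraMap (LucR P Q) K) :=
    IsFractionRing.injective _ _
  apply hinj
  set φK := algebraMap (LucR P Q) K with hφK
  have hu : IsUnit (φK (lb P Q)) :=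
    IsLocalization.map_units K ⟨lb P Q, bReg P Q hQ⟩
  set u := hu.unit with hu_def
  have hub : (u : K) = φK (lb P Q) := hu.unit_spec
  set γ : K := φK (la P Q) * ↑u⁻¹ with hγ
  have hstep : ∀ d : ℕ, φK (lucC P Q d)
      = φK (lb P Q) ^ d.totient * eval₂ (Int.castRingHom K) γ (cyclotomic d ℤ) := by
    intro d
    rw [eval₂_eq_sum_range, natDegree_cyclotomic]
    unfold lucC
    rw [map_sum, Finset.mul_sum]
    refine Finset.sum_congr rfl fun j hj => ?_
    have hj' : j ≤ d.totient := Nat.lt_succ_iff.mp (Finset.mem_range.mp hj)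
    rw [map_mul, map_mul, map_pow, map_pow, map_intCast]
    have hsplit : φK (lb P Q) ^ d.totient
        = φK (lb P Q) ^ (d.totient - j) * φK (lb P Q) ^ j := by
      rw [← pow_add]
      congr 1
      omega
    have hone : φK (lb P Q) ^ j * (↑u⁻¹ : K) ^ j = 1 := by
      rw [← hub, ← mul_pow, u.mul_inv, one_pow]
    rw [hγ, mul_pow, hsplit]
    have hc : ((cyclotomic d ℤ).coeff j : K) = (Int.castRingHom K) ((cyclotomic d ℤ).coeff j) := rfl
    rw [← hc]
    linear_combination (-(((cyclotomic d ℤ).coeff j : K) * φK (la P Q) ^ j *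
      φK (lb P Q) ^ (d.totient - j))) * hone
  rw [map_prod, Finset.prod_congr rfl fun d _ => hstep d, Finset.prod_mul_distrib,
    Finset.prod_pow_eq_pow_sum, ← eval₂_finset_prod,
    prod_cyclotomic_eq_X_pow_sub_one hN, Nat.sum_totient]
  rw [eval₂_sub, eval₂_X_pow, eval₂_one, map_sub, map_pow, map_pow]
  have hba : φK (lb P Q) * γ = φK (la P Q) := by
    rw [hγ, ← hub]
    linear_combination (φK (la P Q)) * u.mul_inv
  have hN' : φK (lb P Q) ^ N * γ ^ N = φK (la P Q) ^ N := by rw [← mul_pow, hba]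
  linear_combination hN'

lemma prodC_eq_U (hQ : Q ≠ 0) (hD : P ^ 2 - 4 * Q ≠ 0) {N : ℕ} (hN : 0 < N) :
    ((lucasU P Q N : ℤ) : LucR P Q) = ∏ d ∈ N.divisors.erase 1, lucC P Q d := by
  have h1 : (1 : ℕ) ∈ N.divisors := Nat.one_mem_divisors.mpr hN.ne'
  have hsplit := Finset.mul_prod_erase _ (lucC P Q) h1
  rw [lucC_one] at hsplit
  apply (mul_cancel_left_mem_nonZeroDivisors (abReg P Q hD)).mp
  rw [key_U, hsplit, prod_lucC P Q hQ hN]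

section
variable (hnd : ∀ m : ℕ, 1 ≤ m → lucasU P Q m ≠ 0)
include hnd

lemma mobiusDualU_ne_zero {n : ℕ} (hn : 0 < n) : mobiusDualU P Q n ≠ 0 := by
  unfold mobiusDualU
  rw [Finset.prod_ne_zero_iff]
  intro d hd
  apply zpow_ne_zero
  exact_mod_cast hnd d (Nat.pos_of_mem_divisors hd)

lemma U_eq_prod_mobius : ∀ N, 0 < N →
    ((lucasU P Q N : ℤ) : ℚ) = ∏ d ∈ N.divisors, mobiusDualU P Q d := by
  have key := (ArithmeticFunction.prod_eq_iff_prod_pow_moebius_eq_of_nonzero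
    (f := fun n => mobiusDualU P Q n) (g := fun n => ((lucasU P Q n : ℤ) : ℚ))
    (fun n hn => mobiusDualU_ne_zero P Q hnd hn)
    (fun n hn => by simpa using (Int.cast_ne_zero (α := ℚ)).mpr (hnd n hn))).mpr ?_
  · intro N hN
    exact (key N hN).symm
  · intro n hn
    exact Nat.prod_divisorsAntidiagonal' (f := fun a b =>
      ((lucasU P Q b : ℤ) : ℚ) ^ (ArithmeticFunction.moebius a))

end

lemma mobiusDualU_one : mobiusDualU P Q 1 = 1 := by
  simp [mobiusDualU, lucasU]

lemma claim (hQ : Q ≠ 0) (hD : P ^ 2 - 4 * Q ≠ 0)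
    (hnd : ∀ m : ℕ, 1 ≤ m → lucasU P Q m ≠ 0) :
    ∀ N, 2 ≤ N → ∃ x y : ℤ, y ≠ 0 ∧ (x : ℚ) = mobiusDualU P Q N * y ∧
      ((x : ℤ) : LucR P Q) = ((y : ℤ) : LucR P Q) * lucC P Q N := by
  intro N
  induction N using Nat.strong_induction_on with
  | _ N IH =>
  intro hN2
  have hNpos : 0 < N := by omega
  classical
  set E := (N.divisors.erase 1).erase N with hE
  have hEprop : ∀ e ∈ E, (2 ≤ e ∧ e < N) ∧ e ∈ N.divisors := by
    intro e he
    rw [hE, Finset.mem_erase, Finset.mem_erase] at he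
    obtain ⟨heN, he1, hed⟩ := he
    have h1 : 0 < e := Nat.pos_of_mem_divisors hed
    have h2 : e ∣ N := Nat.dvd_of_mem_divisors hed
    have h3 : e ≤ N := Nat.le_of_dvd hNpos h2
    exact ⟨⟨by omega, by omega⟩, hed⟩
  have H : ∀ e : ℕ, ∃ x y : ℤ, e ∈ E → (y ≠ 0 ∧ (x : ℚ) = mobiusDualU P Q e * y ∧
      ((x : ℤ) : LucR P Q) = ((y : ℤ) : LucR P Q) * lucC P Q e) := by
    intro e
    by_cases he : e ∈ E
    · obtain ⟨x, y, h⟩ := IH e (hEprop e he).1.2 (hEprop e he).1.1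
      exact ⟨x, y, fun _ => h⟩
    · exact ⟨1, 1, fun h => absurd h he⟩
  choose xf yf hf using H
  have hxne : ∀ e ∈ E, (xf e : ℚ) ≠ 0 := by
    intro e he
    obtain ⟨hy0, hq, _⟩ := hf e he
    rw [hq]
    exact mul_ne_zero (mobiusDualU_ne_zero P Q hnd (by have := (hEprop e he).1.1; omega))
      (Int.cast_ne_zero.mpr hy0)
  refine ⟨lucasU P Q N * ∏ e ∈ E, yf e, ∏ e ∈ E, xf e, ?_, ?_, ?_⟩
  · rw [Finset.prod_ne_zero_iff]
    intro e he
    exact fun h => hxne e he (by rw [h]; simp)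
  · -- ℚ identity
    have hUN := U_eq_prod_mobius P Q hnd N hNpos
    have h1 : (1 : ℕ) ∈ N.divisors := Nat.one_mem_divisors.mpr hNpos.ne'
    have hNdiv : N ∈ N.divisors.erase 1 := by
      rw [Finset.mem_erase]
      exact ⟨by omega, Nat.mem_divisors_self N hNpos.ne'⟩
    rw [← Finset.mul_prod_erase _ _ h1, mobiusDualU_one, one_mul,
      ← Finset.mul_prod_erase _ _ hNdiv, ← hE] at hUN
    push_cast
    rw [hUN]
    rw [Finset.prod_congr rfl (fun e he => (hf e he).2.1), Finset.prod_mul_distrib]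
    push_cast
    ring
  · -- R identity
    have hUprod := prodC_eq_U P Q hQ hD hNpos
    have hNdiv : N ∈ N.divisors.erase 1 := by
      rw [Finset.mem_erase]
      exact ⟨by omega, Nat.mem_divisors_self N hNpos.ne'⟩
    rw [← Finset.mul_prod_erase _ _ hNdiv, ← hE] at hUprod
    push_cast
    rw [hUprod]
    rw [Finset.prod_congr rfl (fun e he => (hf e he).2.2), Finset.prod_mul_distrib]
    push_cast
    ring

section DvdPart

variable (p : ℕ)

lemma pd_la_sq (hpP : (p : ℤ) ∣ P) (hpQ : (p : ℤ) ∣ Q) :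
    ((p : ℤ) : LucR P Q) ∣ la P Q ^ 2 := by
  obtain ⟨P1, hP1⟩ := hpP
  obtain ⟨Q1, hQ1⟩ := hpQ
  refine ⟨(P1 : LucR P Q) * la P Q - (Q1 : LucR P Q), ?_⟩
  rw [la_sq, hP1, hQ1]
  push_cast
  ring

lemma pd_lb_sq (hpP : (p : ℤ) ∣ P) (hpQ : (p : ℤ) ∣ Q) :
    ((p : ℤ) : LucR P Q) ∣ lb P Q ^ 2 := by
  obtain ⟨P1, hP1⟩ := hpP
  obtain ⟨Q1, hQ1⟩ := hpQ
  refine ⟨(P1 : LucR P Q) * lb P Q - (Q1 : LucR P Q), ?_⟩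
  rw [lb_sq, hP1, hQ1]
  push_cast
  ring

lemma pd_lab (hpQ : (p : ℤ) ∣ Q) :
    ((p : ℤ) : LucR P Q) ∣ la P Q * lb P Q := by
  obtain ⟨Q1, hQ1⟩ := hpQ
  refine ⟨(Q1 : LucR P Q), ?_⟩
  rw [lab, hQ1]
  push_cast
  ring

lemma mono_dvd (hpP : (p : ℤ) ∣ P) (hpQ : (p : ℤ) ∣ Q) (s t : ℕ) :
    ((p : ℤ) : LucR P Q) ^ ((s + t) / 2) ∣ la P Q ^ s * lb P Q ^ t := by
  have hs := Nat.div_add_mod s 2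
  have ht := Nat.div_add_mod t 2
  have hrw : la P Q ^ s * lb P Q ^ t
      = ((la P Q ^ 2) ^ (s / 2) * (lb P Q ^ 2) ^ (t / 2)) *
        (la P Q ^ (s % 2) * lb P Q ^ (t % 2)) := by
    conv_lhs => rw [← hs, ← ht]
    rw [pow_add, pow_add, pow_mul, pow_mul]
    ring
  have hexp : (s + t) / 2 = (s / 2 + t / 2) + (s % 2 + t % 2) / 2 := by omega
  rw [hrw, hexp, pow_add, pow_add]
  refine mul_dvd_mul (mul_dvd_mul ?_ ?_) ?_
  · exact pow_dvd_pow_of_dvd (pd_la_sq P Q p hpP hpQ) _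
  · exact pow_dvd_pow_of_dvd (pd_lb_sq P Q p hpP hpQ) _
  · rcases Nat.mod_two_eq_zero_or_one s with h1 | h1 <;>
      rcases Nat.mod_two_eq_zero_or_one t with h2 | h2 <;>
      rw [h1, h2] <;> simp
    exact pd_lab P Q p hpQ

lemma lucC_dvd (hpP : (p : ℤ) ∣ P) (hpQ : (p : ℤ) ∣ Q) (N : ℕ) :
    ((p : ℤ) : LucR P Q) ^ (N.totient / 2) ∣ lucC P Q N := by
  unfold lucC
  apply Finset.dvd_sum
  intro j hj
  have hj' : j ≤ N.totient := Nat.lt_succ_iff.mp (Finset.mem_range.mp hj)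
  have h := mono_dvd P Q p hpP hpQ j (N.totient - j)
  rw [show j + (N.totient - j) = N.totient by omega] at h
  rw [mul_assoc]
  exact h.mul_left _

end DvdPart

lemma lucC_two_pow (k : ℕ) :
    lucC P Q (2 ^ (k + 1)) = la P Q ^ (2 ^ k) + lb P Q ^ (2 ^ k) := by
  classical
  have hcyc : cyclotomic (2 ^ (k + 1)) ℤ = 1 + X ^ (2 ^ k) := by
    rw [cyclotomic_prime_pow_eq_geom_sum Nat.prime_two]
    rw [Finset.sum_range_succ, Finset.sum_range_one]
    simp
  have htot : (2 ^ (k + 1)).totient = 2 ^ k := by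
    rw [Nat.totient_prime_pow Nat.prime_two (Nat.succ_pos k)]
    simp
  have hm : 0 < 2 ^ k := Nat.pow_pos (n := k) (by norm_num)
  unfold lucC
  rw [htot, hcyc]
  have hterm : ∀ j ∈ Finset.range (2 ^ k + 1),
      (((1 + X ^ (2 ^ k) : ℤ[X]).coeff j : LucR P Q)) * la P Q ^ j * lb P Q ^ (2 ^ k - j)
      = (if j = 0 then lb P Q ^ (2 ^ k) else 0) + (if j = 2 ^ k then la P Q ^ (2 ^ k) else 0) := by
    intro j hj
    rw [coeff_add, coeff_one, coeff_X_pow]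
    by_cases hj0 : j = 0
    · subst hj0
      rw [if_pos rfl, if_pos rfl, if_neg (by omega), if_neg (by omega)]
      push_cast
      simp
    · by_cases hjm : j = 2 ^ k
      · subst hjm
        rw [if_neg hj0, if_pos rfl, if_neg hj0, if_pos rfl]
        push_cast
        simp
      · rw [if_neg hj0, if_neg hjm, if_neg hj0, if_neg hjm]
        push_cast
        ring
  rw [Finset.sum_congr rfl hterm, Finset.sum_add_distrib,
    Finset.sum_ite_eq' _ (0 : ℕ), Finset.sum_ite_eq' _ (2 ^ k)]
  rw [if_pos (Finset.mem_range.mpr (by omega)), if_pos (Finset.mem_range.mpr (by omega))]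
  ring

lemma vdvd (a : ℕ) (hPa : (2 : ℤ) ^ a ∣ P) (hQa : (2 : ℤ) ^ (2 * a) ∣ Q) :
    ∀ m : ℕ, ((2 : ℤ) : LucR P Q) ^ (m * a) ∣ la P Q ^ m + lb P Q ^ m := by
  obtain ⟨P2, hP2⟩ := hPa
  obtain ⟨Q2, hQ2⟩ := hQa
  have hP2' : (P : LucR P Q) = ((2 : ℤ) : LucR P Q) ^ a * (P2 : LucR P Q) := by
    rw [hP2]; push_cast; ring
  have hQ2' : (Q : LucR P Q) = ((2 : ℤ) : LucR P Q) ^ (2 * a) * (Q2 : LucR P Q) := by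
    rw [hQ2]; push_cast; ring
  refine two_step ?_ ?_ ?_
  · simp
  · refine ⟨(P2 : LucR P Q), ?_⟩
    rw [pow_one, pow_one, lapb, hP2', one_mul]
  · intro m ih0 ih1
    obtain ⟨c0, h0⟩ := ih0
    obtain ⟨c1, h1⟩ := ih1
    refine ⟨(P2 : LucR P Q) * c1 - (Q2 : LucR P Q) * c0, ?_⟩
    have e1 : la P Q ^ (m + 2) = (P : LucR P Q) * la P Q ^ (m + 1)
        - (Q : LucR P Q) * la P Q ^ m := by
      have h2 : la P Q ^ (m + 2) = la P Q ^ m * la P Q ^ 2 := by ring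
      rw [h2, la_sq]; ring
    have e2 : lb P Q ^ (m + 2) = (P : LucR P Q) * lb P Q ^ (m + 1)
        - (Q : LucR P Q) * lb P Q ^ m := by
      have h2 : lb P Q ^ (m + 2) = lb P Q ^ m * lb P Q ^ 2 := by ring
      rw [h2, lb_sq]; ring
    rw [show la P Q ^ (m + 2) + lb P Q ^ (m + 2)
        = (P : LucR P Q) * (la P Q ^ (m + 1) + lb P Q ^ (m + 1))
          - (Q : LucR P Q) * (la P Q ^ m + lb P Q ^ m) by rw [e1, e2]; ring]
    rw [h0, h1, hP2', hQ2']
    ring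

theorem stmt_6 (P Q : ℤ) (hP : P ≠ 0) (hQ : Q ≠ 0) (hD : P ^ 2 - 4 * Q ≠ 0)
    (hnd : ∀ m : ℕ, 1 ≤ m → lucasU P Q m ≠ 0)
    (p : ℕ) (hp : p.Prime) (hpP : (p : ℤ) ∣ P) (hpQ : (p : ℤ) ∣ Q)
    (n : ℕ) (hn : 1 ≤ n) (hpn : Nat.gcd p n = 1)
    (hexc : ¬ (p = 2 ∧ n = 1 ∧ 2 * padicValInt 2 P > padicValInt 2 Q))
    (k : ℕ) (hk : 1 ≤ k) :
    ∃ t : ℤ, mobiusDualU P Q (p ^ k * n) = (p : ℚ) ^ (p ^ (k - 1)) * (t : ℚ) := by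
  have hp2 := hp.two_le
  set N := p ^ k * n with hN
  have hNpos : 0 < N := Nat.mul_pos (Nat.pow_pos (n := k) (by omega)) hn
  have hN2 : 2 ≤ N := by
    calc 2 ≤ p := hp2
    _ ≤ p ^ k := Nat.le_self_pow (by omega) p
    _ = p ^ k * 1 := (mul_one _).symm
    _ ≤ N := Nat.mul_le_mul_left _ hn
  obtain ⟨x, y, hy0, hq, hR⟩ := claim P Q hQ hD hnd N hN2
  have hdvd : ((p : ℤ) : LucR P Q) ^ (p ^ (k - 1)) ∣ lucC P Q N := by
    by_cases hcase : p = 2 ∧ n = 1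
    · obtain ⟨hp2', hn1⟩ := hcase
      subst hp2' hn1
      have hble : 2 * padicValInt 2 P ≤ padicValInt 2 Q := by
        push_neg at hexc
        exact hexc rfl rfl
      set a := padicValInt 2 P with ha
      have ha1 : 1 ≤ a := by
        have h21 : ((2 : ℕ) : ℤ) ^ 1 ∣ P := by simpa using hpP
        rcases (padicValInt_dvd_iff (p := 2) 1 P).mp (by exact_mod_cast h21) with h | h
        · exact absurd h hP
        · exact h
      have hPa : (2 : ℤ) ^ a ∣ P := by
        have := padicValInt_dvd (p := 2) P
        exact_mod_cast this
      have hQa : (2 : ℤ) ^ (2 * a) ∣ Q := by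
        refine dvd_trans (pow_dvd_pow 2 hble) ?_
        have := padicValInt_dvd (p := 2) Q
        exact_mod_cast this
      obtain ⟨k', rfl⟩ : ∃ k', k = k' + 1 := ⟨k - 1, by omega⟩
      have hNeq : N = 2 ^ (k' + 1) := by rw [hN, mul_one]
      rw [hNeq, lucC_two_pow]
      have hvd := vdvd P Q a hPa hQa (2 ^ k')
      have hle : 2 ^ (k' + 1 - 1) ≤ 2 ^ k' * a := by
        simp only [Nat.add_sub_cancel]
        calc 2 ^ k' = 2 ^ k' * 1 := (mul_one _).symm
        _ ≤ 2 ^ k' * a := Nat.mul_le_mul_left _ ha1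
      refine dvd_trans (pow_dvd_pow _ hle) ?_
      convert hvd using 2
      norm_num
    · refine dvd_trans (pow_dvd_pow _ ?_) (lucC_dvd P Q p hpP hpQ N)
      have hcop : Nat.Coprime (p ^ k) n := Nat.Coprime.pow_left k hpn
      have htot : N.totient = p ^ (k - 1) * (p - 1) * n.totient := by
        rw [hN, Nat.totient_mul hcop, Nat.totient_prime_pow hp (by omega)]
      have hφn : 0 < n.totient := Nat.totient_pos.mpr hn
      rw [Nat.le_div_iff_mul_le (by norm_num)]
      have hkey : 2 ≤ (p - 1) * n.totient := by
        by_cases hp2' : p = 2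
        · have hn1 : n ≠ 1 := fun h => hcase ⟨hp2', h⟩
          have hn2 : n ≠ 2 := by
            intro h
            rw [hp2', h] at hpn
            norm_num at hpn
          have hn3 : 2 < n := by omega
          have heven : Even n.totient := Nat.totient_even hn3
          have hφn2 : 2 ≤ n.totient := by
            rcases heven with ⟨r, hr⟩
            omega
          calc 2 ≤ n.totient := hφn2
          _ = 1 * n.totient := (one_mul _).symm
          _ ≤ (p - 1) * n.totient := Nat.mul_le_mul_right _ (by omega)
        · have hp3 : 3 ≤ p := by omega
          calc 2 ≤ (p - 1) * 1 := by omega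
          _ ≤ (p - 1) * n.totient := Nat.mul_le_mul_left _ hφn
      calc p ^ (k - 1) * 2 ≤ p ^ (k - 1) * ((p - 1) * n.totient) :=
            Nat.mul_le_mul_left _ hkey
      _ = N.totient := by rw [htot]; ring
  obtain ⟨r, hr⟩ := hdvd
  have hcast : ((x : ℤ) : LucR P Q) = (((y * (p : ℤ) ^ (p ^ (k - 1))) : ℤ) : LucR P Q) * r := by
    rw [hR, hr]
    push_cast
    ring
  have hxdvd : (y * (p : ℤ) ^ (p ^ (k - 1))) ∣ x := int_dvd_of_dvd P Q ⟨r, hcast⟩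
  obtain ⟨t, ht⟩ := hxdvd
  refine ⟨t, ?_⟩
  have hyQ : (y : ℚ) ≠ 0 := Int.cast_ne_zero.mpr hy0
  have hfin : mobiusDualU P Q N * y = (p : ℚ) ^ (p ^ (k - 1)) * t * y := by
    rw [← hq, ht]
    push_cast
    ring
  exact mul_right_cancel₀ hyQ hfin

end
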